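/- If an onto rule f on the universal domain (not necessarily tops-only) satisfies SV_i = V_i for every agent i, then f is not obviously manipulable. -/
import Mathlib


/-- A preference profile: each agent `i : Fin n` has a strict preference,
modeled as a linear order on the set of alternatives `X`. -/
abbrev Profile (n : ℕ) (X : Type*) := Fin n → LinearOrder X

/-- The top (best) alternative of a preference `L`. -/
noncomputable def top {X : Type*} [Fintype X] [Nonempty X] (L : LinearOrder X) : X :=
  @Finset.max' X L Finset.univ Finset.univ_nonempty

/-- `x` is strictly preferred to `y` according to `L`. -/
def prefers {X : Type*} (L : LinearOrder X) (x y : X) : Prop := L.lt y x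

/-- The option set left open by preference `L` of agent `i` at rule `f`. -/
def OptionSet {n : ℕ} {X : Type*} (f : Profile n X → X) (i : Fin n) (L : LinearOrder X) :
    Set X :=
  {x | ∃ P : Profile n X, P i = L ∧ f P = x}

/-- `Li'` is a profitable manipulation of `f` at (true preference) `Li` for agent `i`. -/
def IsManip {n : ℕ} {X : Type*} (f : Profile n X → X) (i : Fin n)
    (Li Li' : LinearOrder X) : Prop :=
  ∃ P : Profile n X, P i = Li ∧ prefers Li (f (Function.update P i Li')) (f P)

/-- The worst element of `O(Li')` is strictly `Li`-preferred to the worst element of `O(Li)`.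
For nonempty finite option sets this is equivalent to: some element of `O(Li)` is strictly
worse (w.r.t. `Li`) than every element of `O(Li')`. -/
def WorstImproves {n : ℕ} {X : Type*} (f : Profile n X → X) (i : Fin n)
    (Li Li' : LinearOrder X) : Prop :=
  ∃ w ∈ OptionSet f i Li, ∀ w' ∈ OptionSet f i Li', prefers Li w' w

/-- The best element of `O(Li')` is strictly `Li`-preferred to the best element of `O(Li)`.
For nonempty finite option sets this is equivalent to: some element of `O(Li')` is strictly
better (w.r.t. `Li`) than every element of `O(Li)`. -/
def BestImproves {n : ℕ} {X : Type*} (f : Profile n X → X) (i : Fin n)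
    (Li Li' : LinearOrder X) : Prop :=
  ∃ b' ∈ OptionSet f i Li', ∀ b ∈ OptionSet f i Li, prefers Li b' b

/-- `Li'` is an obvious manipulation of `f` at `Li` for agent `i`. -/
def IsObviousManip {n : ℕ} {X : Type*} (f : Profile n X → X) (i : Fin n)
    (Li Li' : LinearOrder X) : Prop :=
  IsManip f i Li Li' ∧ (WorstImproves f i Li Li' ∨ BestImproves f i Li Li')

/-- `f` is not obviously manipulable. -/
def NOM {n : ℕ} {X : Type*} (f : Profile n X → X) : Prop :=
  ∀ (i : Fin n) (Li Li' : LinearOrder X), ¬ IsObviousManip f i Li Li'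

/-- `f` is tops-only. -/
def TopsOnly {n : ℕ} {X : Type*} [Fintype X] [Nonempty X] (f : Profile n X → X) : Prop :=
  ∀ P P' : Profile n X, (∀ i, top (P i) = top (P' i)) → f P = f P'

/-- The set `V_i` of alternatives that agent `i` vetoes via some preference. -/
def VetoSet {n : ℕ} {X : Type*} (f : Profile n X → X) (i : Fin n) : Set X :=
  {x | ∃ L : LinearOrder X, x ∉ OptionSet f i L}

/-- The set `SV_i` of alternatives strongly vetoed by agent `i`:
`x` is vetoed via `L` precisely when the top of `L` differs from `x`. -/
def StrongVetoSet {n : ℕ} {X : Type*} [Fintype X] [Nonempty X]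
    (f : Profile n X → X) (i : Fin n) : Set X :=
  {x | ∀ L : LinearOrder X, x ∉ OptionSet f i L ↔ top L ≠ x}

/-- `f` is dictatorial: some agent's top alternative is always selected. -/
def Dictatorial {n : ℕ} {X : Type*} [Fintype X] [Nonempty X]
    (f : Profile n X → X) : Prop :=
  ∃ i : Fin n, ∀ P : Profile n X, f P = top (P i)

/-- If an onto rule (not necessarily tops-only) satisfies `SV_i = V_i` for every agent,
then it is not obviously manipulable. -/
theorem strongVeto_eq_veto_implies_NOM {n : ℕ} {X : Type*} [Fintype X] [Nonempty X]
    (f : Profile n X → X) (honto : Function.Surjective f)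
    (h : ∀ i : Fin n, StrongVetoSet f i = VetoSet f i) :
    NOM f := by
  rintro i Li Li' ⟨⟨P, hPi, hman⟩, hcase⟩
  have hmem' : f (Function.update P i Li') ∈ OptionSet f i Li' :=
    ⟨Function.update P i Li', Function.update_self i Li' P, rfl⟩
  have hmemf : f P ∈ OptionSet f i Li := ⟨P, hPi, rfl⟩
  have htople : ∀ x : X, Li.le x (top Li) := fun x =>
    @Finset.le_max' X Li Finset.univ x (Finset.mem_univ x)
  rcases hcase with ⟨w, hw, hwall⟩ | ⟨b', hb', hball⟩
  · -- worst case
    have hwveto : w ∉ OptionSet f i Li' := fun hmem =>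
      @lt_irrefl X Li.toPreorder w (hwall w hmem)
    have hSV : w ∈ StrongVetoSet f i := by rw [h i]; exact ⟨Li', hwveto⟩
    have htop : top Li = w := by
      by_contra hne
      exact ((hSV Li).mpr hne) hw
    have hlt : Li.lt w (f (Function.update P i Li')) := hwall _ hmem'
    have hle : Li.le (f (Function.update P i Li')) w := htop ▸ htople _
    exact @lt_irrefl X Li.toPreorder w (@lt_of_lt_of_le X Li.toPreorder _ _ _ hlt hle)
  · -- best case
    set t := top Li with htdef
    have ht : t ∈ OptionSet f i Li := by
      by_contra htn
      have hSV : t ∈ StrongVetoSet f i := by rw [h i]; exact ⟨Li, htn⟩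
      exact ((hSV Li).mp htn) rfl
    have hlt : Li.lt t b' := hball t ht
    have hle : Li.le b' t := htople b'
    exact @lt_irrefl X Li.toPreorder t (@lt_of_lt_of_le X Li.toPreorder _ _ _ hlt hle)
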